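/- Let G be a polygon graph (a trivalent graph with 2k edges, of which k form the unique cycle and k are cycle legs) and let ω ∈ τ(G) have degree 2. If some cycle edge e has ω(e) = 0, then ω is a sum of two networks (degree-1 elements of τ(G)). -/

import Mathlib

/-!
Common setup: finite (multi)graphs with ordered boundary maps `fst`, `snd`
(the boundary is morally unordered; loops and multiple edges are allowed).
-/

structure TGraph where
  V : Type
  E : Type
  [fintV : Fintype V]
  [fintE : Fintype E]
  [decV : DecidableEq V]
  [decE : DecidableEq E]
  fst : E → V
  snd : E → V

namespace TGraph

variable (G : TGraph)

instance : Fintype G.V := G.fintV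
instance : Fintype G.E := G.fintE
instance : DecidableEq G.V := G.decV
instance : DecidableEq G.E := G.decE

/-- Number of endpoints of `e` equal to `v` (a loop counts twice). -/
def mult (v : G.V) (e : G.E) : ℕ :=
  (if G.fst e = v then 1 else 0) + (if G.snd e = v then 1 else 0)

/-- Valency of a vertex (a loop contributes two). -/
def degree (v : G.V) : ℕ := ∑ e, G.mult v e

/-- A leaf is a vertex incident to exactly one edge (valency one). -/
def IsLeaf (v : G.V) : Prop := G.degree v = 1

instance : DecidablePred G.IsLeaf := fun v => inferInstanceAs (Decidable (G.degree v = 1))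

/-- A graph is trivalent when every non-leaf vertex has valency three. -/
def Trivalent : Prop := ∀ v, G.degree v = 1 ∨ G.degree v = 3

/-- The number of leaves. -/
def numLeaves : ℕ := Fintype.card {v : G.V // G.IsLeaf v}

/-- The number of inner (non-leaf) vertices. -/
def numInner : ℕ := Fintype.card {v : G.V // ¬ G.IsLeaf v}

/-- The number of connected components. -/
noncomputable def components : ℕ :=
  Nat.card (Quot fun v w : G.V =>
    ∃ e, (G.fst e = v ∧ G.snd e = w) ∨ (G.fst e = w ∧ G.snd e = v))

/-- The first Betti number, computed via the Euler characteristic: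
`g = |E| - |V| + c`. -/
noncomputable def betti : ℤ := (Fintype.card G.E : ℤ) - Fintype.card G.V + G.components

/-- The value of the vertex functional `v = Σ_{e ∋ v} e*` on an edge labeling. -/
def vsum (v : G.V) (u : G.E → ℤ) : ℤ := ∑ e, (G.mult v e : ℤ) * u e

/-- Membership in the graded lattice `M^gr = ℤ ⊕ M`: the edge labeling has even
sum at every inner vertex. -/
def InMgr (ω : ℤ × (G.E → ℤ)) : Prop :=
  ∀ v, ¬ G.IsLeaf v → Even (G.vsum v ω.2)

/-- Membership in the graded cone `τ(G) ⊂ ℤ ⊕ M`: nonnegative degree and edge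
values, parity at inner vertices, the triangle inequalities at every inner
vertex (encoded as: twice each incident value is at most the local sum), and
the degree bound `deg ω ≥ deg_v ω` at every inner vertex. -/
def InCone (ω : ℤ × (G.E → ℤ)) : Prop :=
  0 ≤ ω.1 ∧ (∀ e, 0 ≤ ω.2 e) ∧
  ∀ v, ¬ G.IsLeaf v →
    Even (G.vsum v ω.2) ∧
    (∀ e, G.mult v e ≠ 0 → 2 * ω.2 e ≤ G.vsum v ω.2) ∧
    G.vsum v ω.2 ≤ 2 * ω.1

/-- A network: a 0-1 edge labeling with even local sum at every inner vertex.
For trivalent graphs this is exactly a disjoint union of leaf-to-leaf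
edge-paths and cycles. -/
def IsNetwork (u : G.E → ℤ) : Prop :=
  (∀ e, u e = 0 ∨ u e = 1) ∧ ∀ v, ¬ G.IsLeaf v → Even (G.vsum v u)

end TGraph

/-- Cyclic successor on `Fin k`. -/
def cnext {k : ℕ} (i : Fin k) : Fin k := ⟨(i.val + 1) % k, Nat.mod_lt _ i.pos⟩

/-- The polygon graph with `k` cycle edges and `k` cycle legs: cycle vertices
`Sum.inl i`, leaf vertices `Sum.inr i`; cycle edges `Sum.inl i` (from cycle
vertex `i` to cycle vertex `i+1`) and cycle legs `Sum.inr i` (from cycle vertex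
`i` to the `i`-th leaf). -/
def polygon (k : ℕ) : TGraph where
  V := Fin k ⊕ Fin k
  E := Fin k ⊕ Fin k
  fst := Sum.elim (fun i => Sum.inl i) (fun i => Sum.inl i)
  snd := Sum.elim (fun i => Sum.inl (cnext i)) (fun i => Sum.inr i)


namespace PolyAux
variable {k : ℕ}

def cprev (j : Fin k) : Fin k := ⟨(j.val + (k-1)) % k, Nat.mod_lt _ j.pos⟩

lemma cnext_cprev (j : Fin k) : cnext (cprev j) = j := by
  have hk : 0 < k := j.pos
  apply Fin.ext
  show ((j.val + (k-1)) % k + 1) % k = j.val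
  rw [Nat.mod_add_mod]
  have h1 : j.val + (k-1) + 1 = j.val + k := by omega
  rw [h1, Nat.add_mod_right, Nat.mod_eq_of_lt j.isLt]

lemma cprev_cnext (j : Fin k) : cprev (cnext j) = j := by
  have hk : 0 < k := j.pos
  apply Fin.ext
  show ((j.val + 1) % k + (k-1)) % k = j.val
  rw [Nat.mod_add_mod]
  have h1 : j.val + 1 + (k-1) = j.val + k := by omega
  rw [h1, Nat.add_mod_right, Nat.mod_eq_of_lt j.isLt]

lemma iter_val (i : Fin k) (t : ℕ) : (cnext^[t] i).val = (i.val + t) % k := by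
  induction t with
  | zero => simp [Nat.mod_eq_of_lt i.isLt]
  | succ n ih =>
      rw [Function.iterate_succ_apply']
      show ((cnext^[n] i).val + 1) % k = _
      rw [ih, Nat.mod_add_mod, Nat.add_assoc]

def idx (i e : Fin k) : ℕ := (e.val + k - i.val) % k

lemma idx_lt (i e : Fin k) : idx i e < k := Nat.mod_lt _ i.pos

lemma iter_idx (i e : Fin k) : cnext^[idx i e] i = e := by
  apply Fin.ext
  rw [iter_val]
  show (i.val + (e.val + k - i.val) % k) % k = e.val
  rw [Nat.add_mod_mod]
  have h1 : i.val + (e.val + k - i.val) = e.val + k := by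
    have := i.isLt; omega
  rw [h1, Nat.add_mod_right, Nat.mod_eq_of_lt e.isLt]

lemma idx_iter (i : Fin k) (t : ℕ) (ht : t < k) : idx i (cnext^[t] i) = t := by
  unfold idx
  rw [iter_val]
  have hi := i.isLt
  rcases Nat.lt_or_ge (i.val + t) k with h | h
  · rw [Nat.mod_eq_of_lt h]
    have h2 : i.val + t + k - i.val = t + k := by omega
    rw [h2, Nat.add_mod_right, Nat.mod_eq_of_lt ht]
  · have h1 : (i.val + t) % k = i.val + t - k := by
      rw [Nat.mod_eq_sub_mod h, Nat.mod_eq_of_lt (by omega)]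
    rw [h1]
    have h2 : i.val + t - k + k - i.val = t := by omega
    rw [h2, Nat.mod_eq_of_lt ht]

lemma iter_k (i : Fin k) : cnext^[k] i = i := by
  apply Fin.ext
  rw [iter_val, Nat.add_mod_right, Nat.mod_eq_of_lt i.isLt]



lemma mult_inl_inl (j e : Fin k) :
    (polygon k).mult (Sum.inl j) (Sum.inl e)
      = (if e = j then 1 else 0) + (if e = cprev j then 1 else 0) := by
  show (if Sum.inl e = Sum.inl j then 1 else 0) + (if Sum.inl (cnext e) = Sum.inl j then 1 else 0) = _
  have : cnext e = j ↔ e = cprev j := by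
    constructor
    · intro h; rw [← h, cprev_cnext]
    · intro h; rw [h, cnext_cprev]
  simp [this]

lemma mult_inl_inr (j e : Fin k) :
    (polygon k).mult (Sum.inl j) (Sum.inr e) = (if e = j then 1 else 0) := by
  show (if Sum.inl e = Sum.inl j then 1 else 0) + (if Sum.inr e = Sum.inl j then 1 else 0) = _
  simp

lemma mult_inr_inl (j e : Fin k) :
    (polygon k).mult (Sum.inr j) (Sum.inl e) = 0 := by
  show (if Sum.inl e = Sum.inr j then 1 else 0) + (if Sum.inl (cnext e) = Sum.inr j then 1 else 0) = 0
  simp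

lemma mult_inr_inr (j e : Fin k) :
    (polygon k).mult (Sum.inr j) (Sum.inr e) = (if e = j then 1 else 0) := by
  show (if Sum.inl e = Sum.inr j then 1 else 0) + (if Sum.inr e = Sum.inr j then 1 else 0) = _
  simp

lemma vsum_inl (j : Fin k) (u : (polygon k).E → ℤ) :
    (polygon k).vsum (Sum.inl j) u
      = u (Sum.inl (cprev j)) + u (Sum.inl j) + u (Sum.inr j) := by
  unfold TGraph.vsum
  erw [Fintype.sum_sum_type]
  have h1 : ∀ e : Fin k, ((polygon k).mult (Sum.inl j) (Sum.inl e) : ℤ) * u (Sum.inl e)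
      = (if e = j then 1 else 0) * u (Sum.inl e) + (if e = cprev j then 1 else 0) * u (Sum.inl e) := by
    intro e; rw [mult_inl_inl]; push_cast; ring
  have h2 : ∀ e : Fin k, ((polygon k).mult (Sum.inl j) (Sum.inr e) : ℤ) * u (Sum.inr e)
      = (if e = j then 1 else 0) * u (Sum.inr e) := by
    intro e; rw [mult_inl_inr]; push_cast; ring
  simp only [h1, h2, Finset.sum_add_distrib, ite_mul, one_mul, zero_mul,
    Finset.sum_ite_eq', Finset.mem_univ, if_true]
  ring

lemma isLeaf_inr (j : Fin k) : (polygon k).IsLeaf (Sum.inr j) := by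
  unfold TGraph.IsLeaf TGraph.degree
  erw [Fintype.sum_sum_type]
  simp [mult_inr_inl, mult_inr_inr, Finset.sum_ite_eq']

lemma not_isLeaf_inl (j : Fin k) : ¬ (polygon k).IsLeaf (Sum.inl j) := by
  unfold TGraph.IsLeaf TGraph.degree
  erw [Fintype.sum_sum_type]
  simp [mult_inl_inl, mult_inl_inr, Finset.sum_add_distrib, Finset.sum_ite_eq']

variable {k : ℕ}

def fseq (a b : Fin k → ℤ) (i : Fin k) : ℕ → ℤ
  | 0 => 0
  | t+1 =>
      if a (cnext^[t+1] i) % 2 = 0 then a (cnext^[t+1] i) / 2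
      else (fseq a b i t + b (cnext^[t+1] i) / 2) % 2

def idxV (i j : Fin k) : ℕ := if j = i then k else idx i j

def legu (a b : Fin k → ℤ) (i j : Fin k) : ℤ :=
  if b j % 2 = 0 then b j / 2
  else (fseq a b i (idxV i j - 1) + fseq a b i (idxV i j)) % 2

lemma fseq_mem (a b : Fin k → ℤ) (i : Fin k)
    (ha : ∀ j : Fin k, 0 ≤ a j ∧ a j ≤ 2) (hai : a i = 0) (t : ℕ) :
    0 ≤ fseq a b i t ∧ fseq a b i t ≤ 1 ∧ fseq a b i t ≤ a (cnext^[t] i)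
      ∧ a (cnext^[t] i) ≤ fseq a b i t + 1 := by
  induction t with
  | zero => simp [fseq, hai]
  | succ n ih =>
      have hA := ha (cnext^[n+1] i)
      by_cases h : a (cnext^[n+1] i) % 2 = 0
      · simp only [fseq, h, if_true]
        omega
      · simp only [fseq, h, if_false]
        omega

lemma idxV_pos (i j : Fin k) : 1 ≤ idxV i j := by
  unfold idxV
  split
  · exact i.pos
  · rename_i h
    rcases Nat.eq_zero_or_pos (idx i j) with h0 | h0
    · exact absurd (by rw [← iter_idx i j, h0, Function.iterate_zero_apply]) (Ne.symm h)
    · exact h0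

lemma idxV_le (i j : Fin k) : idxV i j ≤ k := by
  unfold idxV
  split
  · exact le_rfl
  · exact (idx_lt i j).le

lemma iter_idxV (i j : Fin k) : cnext^[idxV i j] i = j := by
  unfold idxV
  split
  · rename_i h; rw [h, iter_k]
  · exact iter_idx i j

lemma iter_idxV_pred (i j : Fin k) : cnext^[idxV i j - 1] i = cprev j := by
  have h := iter_idxV i j
  obtain ⟨s, hs⟩ : ∃ s, idxV i j = s + 1 := ⟨idxV i j - 1, by have := idxV_pos i j; omega⟩
  rw [hs] at h
  rw [Function.iterate_succ_apply'] at h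
  rw [hs]
  simp only [Nat.add_sub_cancel]
  rw [← h, cprev_cnext]

lemma idx_cprev (i j : Fin k) : idx i (cprev j) = idxV i j - 1 := by
  rw [← iter_idxV_pred i j, idx_iter]
  have h1 := idxV_le i j
  have h2 := i.pos
  omega

lemma idx_self (i : Fin k) : idx i i = 0 := by
  unfold idx
  rw [show i.val + k - i.val = k by omega, Nat.mod_self]

lemma fseq_k (a b : Fin k → ℤ) (i : Fin k) (hai : a i = 0) :
    fseq a b i k = 0 := by
  have hk : k - 1 + 1 = k := by have := i.pos; omega
  have hik : cnext^[k-1+1] i = i := by rw [hk]; exact iter_k i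
  have h0 : fseq a b i (k-1+1) = 0 := by simp only [fseq, hik, hai]; norm_num
  exact (congrArg (fseq a b i) hk.symm).trans h0

lemma fseq_idxV (a b : Fin k → ℤ) (i j : Fin k) (hai : a i = 0) :
    fseq a b i (idx i j) = fseq a b i (idxV i j) := by
  unfold idxV
  split
  · rename_i h
    rw [h, idx_self, fseq_k a b i hai]
    rfl
  · rfl

lemma legu_parity (a b : Fin k → ℤ) (i : Fin k)
    (ha : ∀ j : Fin k, 0 ≤ a j ∧ a j ≤ 2) (hb : ∀ j : Fin k, 0 ≤ b j ∧ b j ≤ 2)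
    (hE : ∀ j : Fin k, (a (cprev j) + a j + b j) % 2 = 0)
    (hT : ∀ j : Fin k, 2 * a (cprev j) ≤ a (cprev j) + a j + b j ∧
             2 * a j ≤ a (cprev j) + a j + b j ∧
             2 * b j ≤ a (cprev j) + a j + b j ∧
             a (cprev j) + a j + b j ≤ 4)
    (hai : a i = 0) (j : Fin k) :
    (fseq a b i (idxV i j - 1) + fseq a b i (idxV i j) + legu a b i j) % 2 = 0 := by
  obtain ⟨s, hs⟩ : ∃ s, idxV i j = s + 1 := ⟨idxV i j - 1, by have := idxV_pos i j; omega⟩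
  have hj : cnext^[s+1] i = j := by rw [← hs]; exact iter_idxV i j
  have hpj : cnext^[s] i = cprev j := by
    have := iter_idxV_pred i j; rwa [hs, Nat.add_sub_cancel] at this
  have hp := fseq_mem a b i ha hai s
  rw [hpj] at hp
  have hq : fseq a b i (s+1) =
      if a j % 2 = 0 then a j / 2 else (fseq a b i s + b j / 2) % 2 := by
    simp only [fseq, hj]
  have hEj := hE j
  have hTj := hT j
  have haj := ha j
  have hbj := hb j
  rw [hs, Nat.add_sub_cancel]
  unfold legu
  rw [hs, Nat.add_sub_cancel, hq]
  by_cases hA : a j % 2 = 0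
  · by_cases hB : b j % 2 = 0
    · simp only [hA, hB, if_true]
      obtain ⟨c, hc⟩ : ∃ c, a j = 2 * c := ⟨a j / 2, by omega⟩
      obtain ⟨d, hd⟩ : ∃ d, b j = 2 * d := ⟨b j / 2, by omega⟩
      obtain ⟨q, hq'⟩ : ∃ q, a (cprev j) = 2 * q := ⟨a (cprev j) / 2, by omega⟩
      have hpq : fseq a b i s = q := by omega
      omega
    · simp only [hA, hB, if_true, if_false]; omega
  · by_cases hB : b j % 2 = 0 <;> simp only [hA, hB, if_true, if_false] <;> omega

lemma mult_self_ne (j : Fin k) : (polygon k).mult (Sum.inl j) (Sum.inl j) ≠ 0 := by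
  rw [mult_inl_inl]; split_ifs with h1 h2 <;> first | omega | exact absurd rfl h1

lemma mult_prev_ne (j : Fin k) : (polygon k).mult (Sum.inl j) (Sum.inl (cprev j)) ≠ 0 := by
  rw [mult_inl_inl]; split_ifs with h1 h2 <;> first | omega | exact absurd rfl h2

lemma mult_leg_ne (j : Fin k) : (polygon k).mult (Sum.inl j) (Sum.inr j) ≠ 0 := by
  rw [mult_inl_inr]; simp

lemma legu_mem (a b : Fin k → ℤ) (i : Fin k)
    (ha : ∀ j : Fin k, 0 ≤ a j ∧ a j ≤ 2) (hb : ∀ j : Fin k, 0 ≤ b j ∧ b j ≤ 2)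
    (hai : a i = 0) (j : Fin k) :
    0 ≤ legu a b i j ∧ legu a b i j ≤ 1 ∧ legu a b i j ≤ b j
      ∧ b j ≤ legu a b i j + 1 := by
  have hbj := hb j
  unfold legu
  split
  · rename_i h; omega
  · rename_i h; omega
end PolyAux

open PolyAux

theorem degree_two_with_zero_cycle_edge_decomposes (k : ℕ)
    (ω : ℤ × ((polygon k).E → ℤ)) (hω : (polygon k).InCone ω) (hdeg : ω.1 = 2)
    (i : Fin k) (hi : ω.2 (Sum.inl i) = 0) :
    ∃ u w : (polygon k).E → ℤ,
      (polygon k).InCone (1, u) ∧ (polygon k).InCone (1, w) ∧ ω = (1, u) + (1, w) := by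
  classical
  obtain ⟨hd0, hnn, hver⟩ := hω
  set A : Fin k → ℤ := fun e => ω.2 (Sum.inl e) with hA_def
  set B : Fin k → ℤ := fun e => ω.2 (Sum.inr e) with hB_def
  have hAi : A i = 0 := hi
  -- per-vertex facts from the cone membership
  have hver' : ∀ j : Fin k,
      (A (cprev j) + A j + B j) % 2 = 0 ∧
      2 * A (cprev j) ≤ A (cprev j) + A j + B j ∧
      2 * A j ≤ A (cprev j) + A j + B j ∧
      2 * B j ≤ A (cprev j) + A j + B j ∧
      A (cprev j) + A j + B j ≤ 4 := by
    intro j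
    obtain ⟨he, ht, hs⟩ := hver (Sum.inl j) (not_isLeaf_inl j)
    rw [vsum_inl] at he hs
    refine ⟨Int.even_iff.mp he, ?_, ?_, ?_, ?_⟩
    · have := ht (Sum.inl (cprev j)) (mult_prev_ne j)
      rwa [vsum_inl] at this
    · have := ht (Sum.inl j) (mult_self_ne j)
      rwa [vsum_inl] at this
    · have := ht (Sum.inr j) (mult_leg_ne j)
      rwa [vsum_inl] at this
    · rw [hdeg] at hs
      have h4 : (2:ℤ) * 2 = 4 := by norm_num
      rw [h4] at hs
      exact hs
  have hA2 : ∀ j : Fin k, 0 ≤ A j ∧ A j ≤ 2 := by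
    intro j
    have h1 := (hver' j).2.2.1
    have h2 := (hver' j).2.2.2.2
    exact ⟨hnn (Sum.inl j), by omega⟩
  have hB2 : ∀ j : Fin k, 0 ≤ B j ∧ B j ≤ 2 := by
    intro j
    have h1 := (hver' j).2.2.2.1
    have h2 := (hver' j).2.2.2.2
    exact ⟨hnn (Sum.inr j), by omega⟩
  -- the master per-vertex numeric facts
  have key : ∀ j : Fin k,
      (0 ≤ fseq A B i (idx i (cprev j)) ∧ fseq A B i (idx i (cprev j)) ≤ 1 ∧
        fseq A B i (idx i (cprev j)) ≤ A (cprev j) ∧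
        A (cprev j) ≤ fseq A B i (idx i (cprev j)) + 1) ∧
      (0 ≤ fseq A B i (idx i j) ∧ fseq A B i (idx i j) ≤ 1 ∧
        fseq A B i (idx i j) ≤ A j ∧ A j ≤ fseq A B i (idx i j) + 1) ∧
      (0 ≤ legu A B i j ∧ legu A B i j ≤ 1 ∧
        legu A B i j ≤ B j ∧ B j ≤ legu A B i j + 1) ∧
      (fseq A B i (idx i (cprev j)) + fseq A B i (idx i j) + legu A B i j) % 2 = 0 := by
    intro j
    have e1 : idx i (cprev j) = idxV i j - 1 := idx_cprev i j
    have e2 : fseq A B i (idx i j) = fseq A B i (idxV i j) := fseq_idxV A B i j hAi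
    have m1 := fseq_mem A B i hA2 hAi (idx i (cprev j))
    rw [iter_idx] at m1
    have m2 := fseq_mem A B i hA2 hAi (idx i j)
    rw [iter_idx] at m2
    have m3 := legu_mem A B i hA2 hB2 hAi j
    have par := legu_parity A B i hA2 hB2 (fun j => (hver' j).1)
      (fun j => ⟨(hver' j).2.1, (hver' j).2.2.1, (hver' j).2.2.2.1, (hver' j).2.2.2.2⟩) hAi j
    rw [← e1, ← e2] at par
    exact ⟨m1, m2, m3, par⟩
  refine ⟨Sum.elim (fun e => fseq A B i (idx i e)) (legu A B i),
    Sum.elim (fun e => A e - fseq A B i (idx i e)) (fun j => B j - legu A B i j),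
    ⟨by norm_num, ?_, ?_⟩, ⟨by norm_num, ?_, ?_⟩, ?_⟩
  · -- u nonneg
    rintro (e | e)
    · simpa using ((key e).2.1).1
    · simpa using ((key e).2.2.1).1
  · -- u vertex conditions
    rintro (j | j) hv
    swap
    · exact absurd (isLeaf_inr j) hv
    have K := key j
    rw [vsum_inl]
    simp only [Sum.elim_inl, Sum.elim_inr]
    refine ⟨Int.even_iff.mpr (by omega), ?_, by omega⟩
    rintro (e | e) he
    · rw [mult_inl_inl] at he
      by_cases h1 : e = j
      · subst h1; simp only [Sum.elim_inl]; omega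
      · by_cases h2 : e = cprev j
        · subst h2; simp only [Sum.elim_inl]; omega
        · simp [h1, h2] at he
    · rw [mult_inl_inr] at he
      by_cases h1 : e = j
      · subst h1; simp only [Sum.elim_inr]; omega
      · simp [h1] at he
  · -- w nonneg
    rintro (e | e)
    · have := (key e).2.1; simp only [Sum.elim_inl]; omega
    · have := (key e).2.2.1; simp only [Sum.elim_inr]; omega
  · -- w vertex conditions
    rintro (j | j) hv
    swap
    · exact absurd (isLeaf_inr j) hv
    have K := key j
    have hp := (hver' j).1
    have hs4 := (hver' j).2.2.2.2
    rw [vsum_inl]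
    simp only [Sum.elim_inl, Sum.elim_inr]
    refine ⟨Int.even_iff.mpr (by omega), ?_, by omega⟩
    rintro (e | e) he
    · rw [mult_inl_inl] at he
      by_cases h1 : e = j
      · subst h1; simp only [Sum.elim_inl]; omega
      · by_cases h2 : e = cprev j
        · subst h2; simp only [Sum.elim_inl]; omega
        · simp [h1, h2] at he
    · rw [mult_inl_inr] at he
      by_cases h1 : e = j
      · subst h1; simp only [Sum.elim_inr]; omega
      · simp [h1] at he
  · -- decomposition
    have h1 : ((1 : ℤ), Sum.elim (fun e => fseq A B i (idx i e)) (legu A B i)) +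
        ((1 : ℤ), Sum.elim (fun e => A e - fseq A B i (idx i e)) (fun j => B j - legu A B i j))
        = (2, fun e => Sum.elim (fun e => fseq A B i (idx i e)) (legu A B i) e +
            Sum.elim (fun e => A e - fseq A B i (idx i e)) (fun j => B j - legu A B i j) e) := by
      rfl
    refine Eq.trans ?_ h1.symm
    refine Prod.ext hdeg ?_
    funext e
    rcases e with e | e
    · simp only [Sum.elim_inl]; ring_nf; rfl
    · simp only [Sum.elim_inr]; ring_nf; rfl
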